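/- arXiv:math/0703141 — 2 statements merged into one kernel-verified Lean document; each statement's English description precedes it below -/
import Mathlib

section
/- Let H₁, H₂ be complex Hilbert spaces, let A : H₁ →L[ℂ] H₂ be a continuous linear map, let P : H₂ →L[ℂ] H₂ be the orthogonal projection onto the closed subspace ker A†, and let G : H₂ →L[ℂ] H₂ be a continuous linear map satisfying A ∘ A† ∘ G = id − P. Let q : H₁ → H₂ be an arbitrary function and define Π : H₁ → H₁ by Π(ω) = ω + A†(G(q ω)). Then for every ω ∈ H₁: A ω + q ω = 0 if and only if A(Π ω) = 0 and P(q ω) = 0. -/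
/-- Abstract form of Lemma 3.11: with `P` the orthogonal projection onto `ker A†`
and `G` a Green operator for `A ∘ A†`, an element `ω` satisfies the self-duality
equation `A ω + q ω = 0` iff the Kuranishi map `Π(ω) = ω + A† (G (q ω))`
satisfies `A (Π ω) = 0` and `P (q ω) = 0`. -/
theorem stmt_5
    {H₁ H₂ : Type*}
    [NormedAddCommGroup H₁] [InnerProductSpace ℂ H₁] [CompleteSpace H₁]
    [NormedAddCommGroup H₂] [InnerProductSpace ℂ H₂] [CompleteSpace H₂]
    (A : H₁ →L[ℂ] H₂)
    (P : H₂ →L[ℂ] H₂)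
    (hP : P = (LinearMap.ker (ContinuousLinearMap.adjoint A : H₂ →ₗ[ℂ] H₁)).subtypeL.comp
        (Submodule.orthogonalProjectionOnto
          (LinearMap.ker (ContinuousLinearMap.adjoint A : H₂ →ₗ[ℂ] H₁))))
    (G : H₂ →L[ℂ] H₂)
    (hG : A.comp ((ContinuousLinearMap.adjoint A).comp G)
        = ContinuousLinearMap.id ℂ H₂ - P)
    (q : H₁ → H₂) (Pi : H₁ → H₁)
    (hPi : ∀ ω, Pi ω = ω + ContinuousLinearMap.adjoint A (G (q ω))) :
    ∀ ω : H₁, A ω + q ω = 0 ↔ (A (Pi ω) = 0 ∧ P (q ω) = 0) := by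
  intro ω
  have hGapp : A (ContinuousLinearMap.adjoint A (G (q ω))) = q ω - P (q ω) := by
    have := congrFun (congrArg DFunLike.coe hG) (q ω)
    simpa using this
  have hkey : A (Pi ω) = A ω + q ω - P (q ω) := by
    rw [hPi, map_add, hGapp]; abel
  constructor
  · intro h
    have hq : q ω = -(A ω) := by
      have := h; rw [add_comm] at this; exact eq_neg_of_add_eq_zero_left this
    have hPA : ∀ x : H₁, P (A x) = 0 := by
      intro x
      rw [hP]
      have hmem : A x ∈ (LinearMap.ker (ContinuousLinearMap.adjoint A : H₂ →ₗ[ℂ] H₁))ᗮ := by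
        intro y hy
        have hy0 : ContinuousLinearMap.adjoint A y = 0 := hy
        rw [← ContinuousLinearMap.adjoint_inner_left A x y, hy0, inner_zero_left]
      simp [Submodule.orthogonalProjectionOnto_apply_of_mem_orthogonal hmem]
    have hPq : P (q ω) = 0 := by rw [hq, map_neg, hPA, neg_zero]
    exact ⟨by rw [hkey, h, hPq, zero_sub, neg_zero], hPq⟩
  · rintro ⟨h1, h2⟩
    have := hkey
    rw [h1, h2, sub_zero] at this
    exact this.symm
end

section
/- Let H₀, H₁, H₂ be complex Hilbert spaces, let B : H₀ →L[ℂ] H₁ and A : H₁ →L[ℂ] H₂ be continuous linear maps with A ∘ B = 0, let P : H₂ →L[ℂ] H₂ be the orthogonal projection onto ker A†, and let G : H₂ →L[ℂ] H₂ satisfy A ∘ A† ∘ G = id − P. Let q : H₁ → H₂ be any function and define Π(ω) = ω + A†(G(q ω)). If ω ∈ H₁ satisfies B† ω = 0 and A ω + q ω = 0, then Π(ω) ∈ ker A ∩ ker B†. -/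
/-- Abstract form of Lemma 3.14: the Kuranishi map `Π(ω) = ω + A† (G (q ω))`
sends solutions of the self-duality equation `A ω + q ω = 0` with `B† ω = 0`
into the harmonic space `ker A ⊓ ker B†`. -/
theorem stmt_6
    {H₀ H₁ H₂ : Type*}
    [NormedAddCommGroup H₀] [InnerProductSpace ℂ H₀] [CompleteSpace H₀]
    [NormedAddCommGroup H₁] [InnerProductSpace ℂ H₁] [CompleteSpace H₁]
    [NormedAddCommGroup H₂] [InnerProductSpace ℂ H₂] [CompleteSpace H₂]
    (B : H₀ →L[ℂ] H₁) (A : H₁ →L[ℂ] H₂)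
    (hAB : A.comp B = 0)
    (P : H₂ →L[ℂ] H₂)
    (hP : P = (LinearMap.ker (ContinuousLinearMap.adjoint A : H₂ →ₗ[ℂ] H₁)).subtypeL.comp
        (Submodule.orthogonalProjectionOnto (LinearMap.ker (ContinuousLinearMap.adjoint A : H₂ →ₗ[ℂ] H₁))))
    (G : H₂ →L[ℂ] H₂)
    (hG : A.comp ((ContinuousLinearMap.adjoint A).comp G)
        = ContinuousLinearMap.id ℂ H₂ - P)
    (q : H₁ → H₂) (Pi : H₁ → H₁)
    (hPi : ∀ ω, Pi ω = ω + ContinuousLinearMap.adjoint A (G (q ω))) :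
    ∀ ω : H₁, ContinuousLinearMap.adjoint B ω = 0 → A ω + q ω = 0 →
      Pi ω ∈ LinearMap.ker (A : H₁ →ₗ[ℂ] H₂) ⊓ LinearMap.ker (ContinuousLinearMap.adjoint B : H₁ →ₗ[ℂ] H₀) := by
  intro ω hB hq
  have hq' : q ω = -(A ω) := by rw [eq_neg_iff_add_eq_zero, add_comm]; exact hq
  -- A ω is orthogonal to ker A†
  have hAω : A ω ∈ (LinearMap.ker (ContinuousLinearMap.adjoint A : H₂ →ₗ[ℂ] H₁))ᗮ := by
    intro u hu
    have : ContinuousLinearMap.adjoint A u = 0 := hu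
    calc inner ℂ u (A ω) = inner ℂ (ContinuousLinearMap.adjoint A u) ω := by
          rw [ContinuousLinearMap.adjoint_inner_left]
      _ = (0 : ℂ) := by rw [this, inner_zero_left]
  have hPAω : P (A ω) = 0 := by
    rw [hP]
    simp [Submodule.orthogonalProjectionOnto_apply_of_mem_orthogonal hAω]
  have hAAG : ∀ x, A (ContinuousLinearMap.adjoint A (G x)) = x - P x := by
    intro x
    have := congrArg (fun T : H₂ →L[ℂ] H₂ => T x) hG
    simpa using this
  constructor
  · show A (Pi ω) = 0
    rw [hPi, map_add, hAAG, hq']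
    simp [hPAω]
  · show ContinuousLinearMap.adjoint B (Pi ω) = 0
    rw [hPi, map_add, hB]
    have hBA : (ContinuousLinearMap.adjoint B).comp (ContinuousLinearMap.adjoint A) = 0 := by
      rw [← ContinuousLinearMap.adjoint_comp, hAB]
      simp
    have := congrArg (fun T : H₂ →L[ℂ] H₀ => T (G (q ω))) hBA
    simpa using this
end
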